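/- arXiv:1308.2500 — 3 statements merged into one kernel-verified Lean document; each statement's English description precedes it below -/
import Mathlib

section
/- Let M be a centrally symmetric convex body in the plane (symmetric about the origin), and let P be a largest-area parallelogram inscribed in M and P' a smallest-area parallelogram circumscribed about M. Then λ(P) ≥ (1/2)·λ(P'). -/
open MeasureTheory Set Pointwise ENNReal

noncomputable section

abbrev Plane := EuclideanSpace ℝ (Fin 2)

/-- 2-dimensional Lebesgue area of a plane set. -/
def area (S : Set Plane) : ℝ := (volume S).toReal

/-- Rotation by π/2 about the origin. -/
def rot (p : Plane) : Plane := WithLp.toLp 2 ![-(p 1), p 0]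

/-- A convex body: compact, convex, with nonempty interior. -/
def IsConvexBody {V : Type*} [NormedAddCommGroup V] [NormedSpace ℝ V] (K : Set V) : Prop :=
  IsCompact K ∧ Convex ℝ K ∧ (interior K).Nonempty

/-- The central symmetral (1/2)(K + (-K)) of K. -/
def centralSymmetral {V : Type*} [NormedAddCommGroup V] [NormedSpace ℝ V] (K : Set V) : Set V :=
  (2:ℝ)⁻¹ • (K + -K)

/-- A (possibly degenerate) parallelogram in the plane. -/
def IsParallelogram (P : Set Plane) : Prop :=
  ∃ c u v : Plane,
    P = (fun st : ℝ × ℝ => c + st.1 • u + st.2 • v) '' (Icc (-1:ℝ) 1 ×ˢ Icc (-1:ℝ) 1)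

lemma vol_par (c a b : Plane) :
    volume ((fun st : ℝ × ℝ => c + st.1 • a + st.2 • b) '' (Icc (-1:ℝ) 1 ×ˢ Icc (-1:ℝ) 1))
      = ENNReal.ofReal (4 * |a 0 * b 1 - a 1 * b 0|) := by
  set A : Matrix (Fin 2) (Fin 2) ℝ := Matrix.of ![![a 0, b 0], ![a 1, b 1]] with hA
  set L : Plane →ₗ[ℝ] Plane := Matrix.toEuclideanLin A with hL
  have hLapp : ∀ y : Plane, L y = y 0 • a + y 1 • b := by
    intro y
    ext i
    simp [hL, Matrix.toEuclideanLin_apply, Matrix.mulVec, dotProduct,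
      Fin.sum_univ_two, hA]
    fin_cases i <;> simp [Matrix.of_apply] <;> ring
  set S : Set Plane := (MeasurableEquiv.toLp 2 (Fin 2 → ℝ)).symm ⁻¹' (Set.univ.pi fun _ => Icc (-1:ℝ) 1) with hS
  have himg : (fun st : ℝ × ℝ => c + st.1 • a + st.2 • b) '' (Icc (-1:ℝ) 1 ×ˢ Icc (-1:ℝ) 1)
      = c +ᵥ (L '' S) := by
    ext x
    constructor
    · rintro ⟨⟨s, t⟩, ⟨hs, ht⟩, rfl⟩
      refine ⟨L ((WithLp.equiv 2 (Fin 2 → ℝ)).symm ![s, t]), ⟨(WithLp.equiv 2 (Fin 2 → ℝ)).symm ![s, t], ?_, rfl⟩, ?_⟩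
      · intro i _
        fin_cases i <;> simpa [hS]
      · rw [hLapp]
        simp [vadd_eq_add]
        abel
    · rintro ⟨_, ⟨y, hy, rfl⟩, rfl⟩
      refine ⟨(y 0, y 1), ⟨?_, ?_⟩, ?_⟩
      · exact hy 0 (mem_univ _)
      · exact hy 1 (mem_univ _)
      · rw [hLapp]; simp [vadd_eq_add]; abel
  have hdet : LinearMap.det L = a 0 * b 1 - b 0 * a 1 := by
    rw [hL, Matrix.toEuclideanLin_eq_toLin, LinearMap.det_toLin]
    simp [hA, Matrix.det_fin_two]
  have hSvol : volume S = 4 := by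
    rw [hS, (EuclideanSpace.volume_preserving_symm_measurableEquiv_toLp (Fin 2)).measure_preimage
      (MeasurableSet.univ_pi (fun _ => measurableSet_Icc)).nullMeasurableSet]
    rw [volume_pi_pi]
    simp only [Real.volume_Icc, Fin.prod_univ_two]
    rw [← ENNReal.ofReal_mul] <;> norm_num
  rw [himg, measure_vadd, Measure.addHaar_image_linearMap, hdet, hSvol]
  rw [show (4:ℝ≥0∞) = ENNReal.ofReal 4 by norm_num, ← ENNReal.ofReal_mul (by positivity)]
  have : a 0 * b 1 - b 0 * a 1 = a 0 * b 1 - a 1 * b 0 := by ring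
  rw [this, mul_comm]

lemma area_par (c a b : Plane) :
    area ((fun st : ℝ × ℝ => c + st.1 • a + st.2 • b) '' (Icc (-1:ℝ) 1 ×ˢ Icc (-1:ℝ) 1))
      = 4 * |a 0 * b 1 - a 1 * b 0| := by
  rw [area, vol_par, ENNReal.toReal_ofReal (by positivity)]

/-- For an o-symmetric plane convex body, a largest inscribed parallelogram has at least
half the area of a smallest circumscribed parallelogram. -/
theorem inscribed_ge_half_circumscribed (M P P' : Set Plane) (hM : IsConvexBody M)
    (hsym : M = -M)
    (hP : IsParallelogram P) (hPM : P ⊆ M)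
    (hPmax : ∀ Q : Set Plane, IsParallelogram Q → Q ⊆ M → area Q ≤ area P)
    (hP' : IsParallelogram P') (hMP' : M ⊆ P')
    (hP'min : ∀ Q : Set Plane, IsParallelogram Q → M ⊆ Q → area P' ≤ area Q) :
    area P ≥ (1/2) * area P' := by
  obtain ⟨hcomp, hconv, hint⟩ := hM
  have hnegmem : ∀ x ∈ M, -x ∈ M := by
    intro x hx
    rw [hsym]
    exact Set.neg_mem_neg.mpr hx
  -- 0 is in the interior of M
  obtain ⟨x₀, hx₀⟩ := hint
  have hx₀' : -x₀ ∈ interior M := by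
    have h1 : x₀ ∈ interior (-M) := hsym ▸ hx₀
    have h2 : interior (-M) = -interior M := by
      rw [show (-M : Set Plane) = (Homeomorph.neg Plane) ⁻¹' M from rfl,
        ← Homeomorph.preimage_interior]
      rfl
    rw [h2] at h1
    exact Set.mem_neg.mp h1
  have h0 : (0:Plane) ∈ interior M := by
    have := hconv.interior hx₀ hx₀' (by norm_num : (0:ℝ) ≤ 1/2)
      (by norm_num : (0:ℝ) ≤ 1/2) (by norm_num)
    convert this using 1
    module
  obtain ⟨ε, hε, hball⟩ := Metric.isOpen_iff.mp isOpen_interior 0 h0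
  -- two elements with positive determinant
  set u₀ : Plane := EuclideanSpace.single 0 (ε/2) with hu₀
  set v₀ : Plane := EuclideanSpace.single 1 (ε/2) with hv₀
  have hu₀M : u₀ ∈ M := by
    apply interior_subset (hball ?_)
    rw [Metric.mem_ball, dist_zero_right, hu₀, EuclideanSpace.norm_single]
    rw [Real.norm_eq_abs, abs_of_pos (by linarith)]
    linarith
  have hv₀M : v₀ ∈ M := by
    apply interior_subset (hball ?_)
    rw [Metric.mem_ball, dist_zero_right, hv₀, EuclideanSpace.norm_single]
    rw [Real.norm_eq_abs, abs_of_pos (by linarith)]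
    linarith
  have hd₀ : (0:ℝ) < u₀ 0 * v₀ 1 - u₀ 1 * v₀ 0 := by
    simp [hu₀, hv₀, EuclideanSpace.single_apply]
    positivity
  -- maximize the determinant over M × M
  have hMne : M.Nonempty := ⟨u₀, hu₀M⟩
  have hcont : ContinuousOn (fun p : Plane × Plane => p.1 0 * p.2 1 - p.1 1 * p.2 0)
      (M ×ˢ M) := by fun_prop
  obtain ⟨⟨u, v⟩, ⟨huM, hvM⟩, hmax⟩ :=
    (hcomp.prod hcomp).exists_isMaxOn (hMne.prod hMne) hcont
  set D : ℝ := u 0 * v 1 - u 1 * v 0 with hD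
  have hmax' : ∀ x ∈ M, ∀ y ∈ M, x 0 * y 1 - x 1 * y 0 ≤ D :=
    fun x hx y hy => hmax (Set.mk_mem_prod hx hy)
  have hDpos : 0 < D := lt_of_lt_of_le hd₀ (hmax' u₀ hu₀M v₀ hv₀M)
  have habs : ∀ x ∈ M, ∀ y ∈ M, |x 0 * y 1 - x 1 * y 0| ≤ D := by
    intro x hx y hy
    rw [abs_le]
    refine ⟨?_, hmax' x hx y hy⟩
    have := hmax' (-x) (hnegmem x hx) y hy
    simp only [PiLp.neg_apply] at this
    linarith
  -- membership lemma: combinations with |α|+|β| ≤ 1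
  have hmem : ∀ (α β : ℝ), |α| + |β| ≤ 1 → ∀ x ∈ M, ∀ y ∈ M, α • x + β • y ∈ M := by
    intro α β hαβ x hx y hy
    set x' : Plane := if 0 ≤ α then x else -x with hx'
    set y' : Plane := if 0 ≤ β then y else -y with hy'
    have hx'M : x' ∈ M := by rw [hx']; split_ifs; exacts [hx, hnegmem x hx]
    have hy'M : y' ∈ M := by rw [hy']; split_ifs; exacts [hy, hnegmem y hy]
    have hax : α • x = |α| • x' := by
      rw [hx']; split_ifs with h
      · rw [abs_of_nonneg h]
      · rw [abs_of_neg (lt_of_not_ge h)]; simp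
    have hay : β • y = |β| • y' := by
      rw [hy']; split_ifs with h
      · rw [abs_of_nonneg h]
      · rw [abs_of_neg (lt_of_not_ge h)]; simp
    have := hconv.sum_mem (t := (Finset.univ : Finset (Fin 3)))
      (w := ![|α|, |β|, 1 - |α| - |β|]) (z := ![x', y', 0])
      (by intro i _; fin_cases i <;> simp <;> linarith [abs_nonneg α, abs_nonneg β])
      (by simp [Fin.sum_univ_three]; try ring)
      (by intro i _; fin_cases i <;> simp [hx'M, hy'M, interior_subset h0])
    simp only [Fin.sum_univ_three, Matrix.cons_val_zero, Matrix.cons_val_one,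
      Matrix.head_cons, Matrix.cons_val_two, Matrix.tail_cons, smul_zero, add_zero] at this
    rwa [hax, hay]
  -- inscribed parallelogram Q
  set qa : Plane := (2:ℝ)⁻¹ • (u + v) with hqa
  set qb : Plane := (2:ℝ)⁻¹ • (u - v) with hqb
  set Q : Set Plane :=
    (fun st : ℝ × ℝ => 0 + st.1 • qa + st.2 • qb) '' (Icc (-1:ℝ) 1 ×ˢ Icc (-1:ℝ) 1) with hQ
  have hQpar : IsParallelogram Q := ⟨0, qa, qb, rfl⟩
  have hQM : Q ⊆ M := by
    rintro z ⟨⟨s, t⟩, ⟨hs, ht⟩, rfl⟩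
    have hz : (0:Plane) + s • qa + t • qb = ((s+t)/2) • u + ((s-t)/2) • v := by
      rw [hqa, hqb]; module
    show (0:Plane) + s • qa + t • qb ∈ M
    rw [hz]
    apply hmem _ _ _ u huM v hvM
    have h2 : |s + t| + |s - t| ≤ 2 := by
      obtain ⟨hs1, hs2⟩ := hs; obtain ⟨ht1, ht2⟩ := ht
      rcases abs_cases (s + t) with ⟨e1, _⟩ | ⟨e1, _⟩ <;>
        rcases abs_cases (s - t) with ⟨e2, _⟩ | ⟨e2, _⟩ <;> linarith
    rw [abs_div, abs_div, abs_two]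
    linarith
  have hQarea : area Q = 2 * D := by
    rw [hQ, area_par]
    have : qa 0 * qb 1 - qa 1 * qb 0 = -(D/2) := by
      simp only [hqa, hqb, PiLp.smul_apply, PiLp.add_apply, PiLp.sub_apply, smul_eq_mul, hD]
      ring
    rw [this, abs_neg, abs_of_pos (by linarith)]
    ring
  -- circumscribed parallelogram Q'
  set Q' : Set Plane :=
    (fun st : ℝ × ℝ => 0 + st.1 • u + st.2 • v) '' (Icc (-1:ℝ) 1 ×ˢ Icc (-1:ℝ) 1) with hQ'
  have hQ'par : IsParallelogram Q' := ⟨0, u, v, rfl⟩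
  have hMQ' : M ⊆ Q' := by
    intro x hx
    refine ⟨((x 0 * v 1 - x 1 * v 0)/D, (u 0 * x 1 - u 1 * x 0)/D), ⟨?_, ?_⟩, ?_⟩
    · rw [mem_Icc, ← abs_le, abs_div, abs_of_pos hDpos, div_le_one hDpos]
      exact habs x hx v hvM
    · rw [mem_Icc, ← abs_le, abs_div, abs_of_pos hDpos, div_le_one hDpos]
      have := habs x hx u huM
      rw [show u 0 * x 1 - u 1 * x 0 = -(x 0 * u 1 - x 1 * u 0) by ring, abs_neg]
      exact this
    · ext i
      simp only [PiLp.add_apply, PiLp.smul_apply, PiLp.zero_apply, smul_eq_mul, zero_add]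
      fin_cases i <;> (field_simp; simp only [Fin.zero_eta, Fin.mk_one, hD]; ring)
  have hQ'area : area Q' = 4 * D := by
    rw [hQ', area_par, abs_of_pos hDpos]
  have h1 := hPmax Q hQpar hQM
  have h2 := hP'min Q' hQ'par hMQ'
  rw [hQarea] at h1
  rw [hQ'area] at h2
  linarith
end
end

section
/- Let M be a centrally symmetric convex body in the plane (M = -M). Then the maximum over x ∈ ℝ² with M ∩ (x + M) ≠ ∅ of λ(conv(M ∪ (x + M))) equals λ(M) + 2·λ(P), where P is a largest-area parallelogram inscribed in M; equivalently, the maximal convex-hull area of two intersecting translates divided by λ(M) equals 1 + 2λ(P)/λ(M). -/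
open MeasureTheory Set Pointwise ENNReal

noncomputable section

namespace MaxHull

def d2 (x m : ℝ × ℝ) : ℝ := x.1 * m.2 - x.2 * m.1

def FL : Plane ≃ₗ[ℝ] ℝ × ℝ where
  toFun p := (p 0, p 1)
  invFun q := WithLp.toLp 2 ![q.1, q.2]
  map_add' a b := rfl
  map_smul' r a := rfl
  left_inv p := by ext i; fin_cases i <;> rfl
  right_inv q := rfl

lemma FL_apply (p : Plane) : FL p = (p 0, p 1) := rfl

def ME : Plane ≃ᵐ ℝ × ℝ :=
  (MeasurableEquiv.toLp 2 (Fin 2 → ℝ)).symm.trans MeasurableEquiv.finTwoArrow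

lemma ME_eq_FL : ⇑ME = ⇑FL := by
  funext p
  rfl

lemma mpME : MeasurePreserving (⇑ME) (volume : Measure Plane) volume :=
  (volume_preserving_finTwoArrow ℝ).comp
    (EuclideanSpace.volume_preserving_symm_measurableEquiv_toLp (Fin 2))

lemma vol_FL_image (S : Set Plane) (hS : MeasurableSet S) :
    volume (⇑FL '' S) = volume S := by
  rw [← ME_eq_FL, MeasurableEquiv.image_eq_preimage_symm]
  exact (mpME.symm ME).measure_preimage hS.nullMeasurableSet

def Lmap (u v : ℝ × ℝ) : (ℝ × ℝ) →ₗ[ℝ] ℝ × ℝ where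
  toFun st := st.1 • u + st.2 • v
  map_add' a b := by
    show (a.1 + b.1) • u + (a.2 + b.2) • v = _
    rw [add_smul, add_smul]; abel_nf
  map_smul' r a := by
    show (r * a.1) • u + (r * a.2) • v = r • (a.1 • u + a.2 • v)
    rw [mul_smul, mul_smul, smul_add]

lemma det_Lmap (u v : ℝ × ℝ) : LinearMap.det (Lmap u v) = d2 u v := by
  rw [← LinearMap.det_toMatrix (Module.Basis.finTwoProd ℝ), Matrix.det_fin_two]
  simp [LinearMap.toMatrix_apply, Lmap, Module.Basis.finTwoProd_zero, Module.Basis.finTwoProd_one,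
    Module.Basis.coe_finTwoProd_repr, d2]
  ring

lemma oneD (A : Set ℝ) (hA : IsCompact A) (hconv : Convex ℝ A) (hne : A.Nonempty) :
    volume (A + Icc (0:ℝ) 1) = volume A + 1 := by
  have hle : sInf A ≤ sSup A := csInf_le_csSup hne hA.bddBelow hA.bddAbove
  have hAeq : A = Icc (sInf A) (sSup A) := by
    apply le_antisymm
    · exact fun x hx => ⟨csInf_le hA.bddBelow hx, le_csSup hA.bddAbove hx⟩
    · exact hconv.ordConnected.out (hA.sInf_mem hne) (hA.sSup_mem hne)
  rw [hAeq, Icc_add_Icc hle (by norm_num : (0:ℝ) ≤ 1), Real.volume_Icc, Real.volume_Icc]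
  rw [show sSup A + 1 - (sInf A + 0) = (sSup A - sInf A) + 1 by ring,
    ENNReal.ofReal_add (by linarith) (by norm_num)]
  norm_num

lemma slice_convex {K : Set (ℝ × ℝ)} (hconv : Convex ℝ K) (y : ℝ) :
    Convex ℝ (Prod.mk y ⁻¹' K) := by
  intro s1 h1 s2 h2 a b ha hb hab
  have := hconv h1 h2 ha hb hab
  have hy : a * y + b * y = y := by rw [← add_mul, hab, one_mul]
  simpa [Prod.smul_mk, Prod.mk_add_mk, hy] using this

lemma slice_compact {K : Set (ℝ × ℝ)} (hK : IsCompact K) (y : ℝ) :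
    IsCompact (Prod.mk y ⁻¹' K) := by
  apply (hK.image continuous_snd).of_isClosed_subset
  · exact hK.isClosed.preimage (Continuous.prodMk_right y)
  · exact fun t ht => ⟨(y, t), ht, rfl⟩

lemma fub (K : Set (ℝ × ℝ)) (hK : IsCompact K) (hconv : Convex ℝ K) :
    volume (K + ({0} ×ˢ Icc (0:ℝ) 1)) = volume K + volume (Prod.fst '' K) := by
  have hseg : IsCompact (({0} : Set ℝ) ×ˢ Icc (0:ℝ) 1) :=
    isCompact_singleton.prod isCompact_Icc
  have hT : IsCompact (K + ({0} : Set ℝ) ×ˢ Icc (0:ℝ) 1) := hK.add hseg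
  have hfst : IsCompact (Prod.fst '' K) := hK.image continuous_fst
  have hslice : ∀ y : ℝ, Prod.mk y ⁻¹' (K + ({0} : Set ℝ) ×ˢ Icc (0:ℝ) 1)
      = (Prod.mk y ⁻¹' K) + Icc (0:ℝ) 1 := by
    intro y
    ext t
    constructor
    · rintro ⟨⟨a1, a2⟩, ha, ⟨b1, b2⟩, ⟨hb1, hb2⟩, hab⟩
      have h1 : a1 + b1 = y := congrArg Prod.fst hab
      have h2 : a2 + b2 = t := congrArg Prod.snd hab
      simp only [mem_singleton_iff] at hb1
      subst hb1
      rw [add_zero] at h1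
      subst h1
      exact ⟨a2, ha, b2, hb2, h2⟩
    · rintro ⟨s, hs, r, hr, rfl⟩
      exact ⟨(y, s), hs, (0, r), ⟨rfl, hr⟩, by simp⟩
  have hpt : ∀ y : ℝ, volume (Prod.mk y ⁻¹' (K + ({0} : Set ℝ) ×ˢ Icc (0:ℝ) 1))
      = volume (Prod.mk y ⁻¹' K) + (Prod.fst '' K).indicator (fun _ => (1:ℝ≥0∞)) y := by
    intro y
    rw [hslice y]
    by_cases hy : y ∈ Prod.fst '' K
    · obtain ⟨a, ha, hay⟩ := hy
      have hne : (Prod.mk y ⁻¹' K).Nonempty := by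
        refine ⟨a.2, ?_⟩
        show (y, a.2) ∈ K
        rwa [show (y, a.2) = a from Prod.ext hay.symm rfl]
      rw [oneD _ (slice_compact hK y) (slice_convex hconv y) hne,
        indicator_of_mem (show y ∈ Prod.fst '' K from ⟨a, ha, hay⟩) (fun _ => (1:ℝ≥0∞))]
    · have hempty : Prod.mk y ⁻¹' K = ∅ := by
        ext t; simp only [mem_preimage, mem_empty_iff_false, iff_false]
        exact fun ht => hy ⟨(y, t), ht, rfl⟩
      rw [hempty, Set.empty_add, indicator_of_notMem hy]
      simp
  rw [Measure.volume_eq_prod, Measure.prod_apply hT.measurableSet,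
    Measure.prod_apply hK.measurableSet]
  calc ∫⁻ y, volume (Prod.mk y ⁻¹' (K + ({0} : Set ℝ) ×ˢ Icc (0:ℝ) 1))
      = ∫⁻ y, (volume (Prod.mk y ⁻¹' K)
          + (Prod.fst '' K).indicator (fun _ => (1:ℝ≥0∞)) y) := by
        exact lintegral_congr hpt
    _ = (∫⁻ y, volume (Prod.mk y ⁻¹' K))
          + ∫⁻ y, (Prod.fst '' K).indicator (fun _ => (1:ℝ≥0∞)) y := by
        exact lintegral_add_right _ (measurable_const.indicator hfst.measurableSet)
    _ = (∫⁻ y, volume (Prod.mk y ⁻¹' K)) + volume (Prod.fst '' K) := by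
        rw [lintegral_indicator hfst.measurableSet, setLIntegral_one]

lemma linimage_add {E F : Type*} [AddCommGroup E] [Module ℝ E] [AddCommGroup F] [Module ℝ F]
    (f : E →ₗ[ℝ] F) (A B : Set E) : ⇑f '' (A + B) = ⇑f '' A + ⇑f '' B := by
  ext z
  constructor
  · rintro ⟨w, ⟨a, ha, b, hb, rfl⟩, rfl⟩
    exact ⟨f a, ⟨a, ha, rfl⟩, f b, ⟨b, hb, rfl⟩, (map_add f a b).symm⟩
  · rintro ⟨_, ⟨a, ha, rfl⟩, _, ⟨b, hb, rfl⟩, rfl⟩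
    exact ⟨a + b, ⟨a, ha, b, hb, rfl⟩, map_add f a b⟩

lemma linimage_segment {E F : Type*} [AddCommGroup E] [Module ℝ E] [AddCommGroup F] [Module ℝ F]
    (f : E →ₗ[ℝ] F) (x : E) : ⇑f '' segment ℝ 0 x = segment ℝ 0 (f x) := by
  rw [segment_eq_image, segment_eq_image, ← Set.image_comp]
  apply Set.image_congr
  intro θ _
  simp only [Function.comp_apply, map_add, _root_.map_smul, map_zero]

def rot2 (x : ℝ × ℝ) : ℝ × ℝ := (-x.2, x.1)

lemma main_formula (N : Set (ℝ × ℝ)) (hN : IsCompact N) (hconv : Convex ℝ N) (x : ℝ × ℝ) :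
    volume (N + segment ℝ 0 x) = volume N + volume ((fun m => d2 x m) '' N) := by
  by_cases hx : x = 0
  · subst hx
    have h1 : N + segment ℝ (0 : ℝ × ℝ) 0 = N := by
      rw [segment_same]
      ext z
      constructor
      · rintro ⟨a, ha, b, hb, rfl⟩
        simp only [mem_singleton_iff] at hb
        simpa [hb] using ha
      · intro hz; exact ⟨z, hz, 0, rfl, add_zero z⟩
    have h2 : volume ((fun m => d2 0 m) '' N) = 0 := by
      have hsub : ((fun m => d2 0 m) '' N) ⊆ {(0:ℝ)} := by
        rintro r ⟨m, _, rfl⟩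
        simp [d2]
      exact measure_mono_null hsub (measure_singleton 0)
    rw [h1, h2, add_zero]
  · set n : ℝ := x.1 ^ 2 + x.2 ^ 2 with hn_def
    have hn : 0 < n := by
      have h : x.1 ≠ 0 ∨ x.2 ≠ 0 := by
        by_contra h
        push_neg at h
        exact hx (Prod.ext h.1 h.2)
      rcases h with h | h <;> positivity
    have hLI : ∀ m : ℝ × ℝ, Lmap (rot2 x) x (Lmap (-x.2 / n, x.1 / n) (x.1 / n, x.2 / n) m) = m := by
      intro m
      simp only [Lmap, LinearMap.coe_mk, AddHom.coe_mk, rot2, Prod.smul_mk, Prod.mk_add_mk,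
        smul_eq_mul]
      apply Prod.ext <;>
        (simp only [Prod.fst_add, Prod.snd_add, Prod.smul_fst, Prod.smul_snd, smul_eq_mul]
         field_simp
         ring)
    have hdet : |LinearMap.det (Lmap (rot2 x) x)| = n := by
      rw [det_Lmap]
      simp only [d2, rot2]
      rw [abs_of_nonpos (by nlinarith)]
      ring
    set L := Lmap (rot2 x) x
    set Linv := Lmap (-x.2 / n, x.1 / n) (x.1 / n, x.2 / n)
    set K : Set (ℝ × ℝ) := ⇑Linv '' N with hK_def
    have hKimg : ⇑L '' K = N := by
      rw [hK_def, ← Set.image_comp]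
      simp only [Function.comp_def, hLI]
      exact Set.image_id N
    have hKc : IsCompact K := hN.image Linv.continuous_of_finiteDimensional
    have hKconv : Convex ℝ K := hconv.linear_image Linv
    have hval : ∀ θ : ℝ, (1 - θ) • (0 : ℝ × ℝ) + θ • ((0:ℝ), (1:ℝ)) = (0, θ) := by
      intro θ
      simp [Prod.smul_mk]
    have hseg2 : segment ℝ (0 : ℝ × ℝ) ((0:ℝ), (1:ℝ)) = ({0} : Set ℝ) ×ˢ Icc (0:ℝ) 1 := by
      rw [segment_eq_image]
      ext ⟨a, b⟩
      simp only [Set.mem_image, Set.mem_prod, Set.mem_singleton_iff, Set.mem_Icc]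
      constructor
      · rintro ⟨θ, hθ, h⟩
        rw [hval θ] at h
        obtain ⟨ha, hb⟩ := Prod.mk.injEq .. ▸ h
        exact ⟨ha.symm, hb ▸ hθ⟩
      · rintro ⟨rfl, hb⟩
        exact ⟨b, hb, by rw [hval b]⟩
    have hLseg : ⇑L '' segment ℝ 0 ((0:ℝ), (1:ℝ)) = segment ℝ 0 x := by
      rw [linimage_segment]
      have h : L ((0:ℝ), (1:ℝ)) = x := by
        simp only [L, Lmap, LinearMap.coe_mk, AddHom.coe_mk]
        simp
      rw [h]
    have hmain : N + segment ℝ 0 x = ⇑L '' (K + segment ℝ 0 ((0:ℝ), (1:ℝ))) := by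
      rw [linimage_add, hKimg, hLseg]
    have hvolN : volume N = ENNReal.ofReal n * volume K := by
      conv_lhs => rw [← hKimg]
      rw [Measure.addHaar_image_linearMap, hdet]
    have hfstK : Prod.fst '' K = (fun r => n⁻¹ * r) '' ((fun m => d2 x m) '' N) := by
      rw [hK_def, ← Set.image_comp, ← Set.image_comp]
      apply Set.image_congr
      intro m _
      show (Lmap (-x.2 / n, x.1 / n) (x.1 / n, x.2 / n) m).1 = n⁻¹ * d2 x m
      simp only [Lmap, LinearMap.coe_mk, AddHom.coe_mk, Prod.smul_mk, Prod.mk_add_mk,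
        smul_eq_mul, d2, Prod.fst_add]
      field_simp
      ring
    have hvolfst : volume (Prod.fst '' K)
        = ENNReal.ofReal n⁻¹ * volume ((fun m => d2 x m) '' N) := by
      rw [hfstK]
      have h : (fun r : ℝ => n⁻¹ * r) = ⇑(n⁻¹ • (LinearMap.id : ℝ →ₗ[ℝ] ℝ)) := by
        funext r; simp
      rw [h, Measure.addHaar_image_linearMap]
      congr 2
      rw [LinearMap.det_smul, LinearMap.det_id, Module.finrank_self]
      simp [abs_of_nonneg (le_of_lt (inv_pos.mpr hn))]
    rw [hmain, Measure.addHaar_image_linearMap, hdet, hseg2, fub K hKc hKconv, hvolN, hvolfst,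
      mul_add, ← mul_assoc, ← ENNReal.ofReal_mul (le_of_lt hn), mul_inv_cancel₀ (ne_of_gt hn),
      ENNReal.ofReal_one, one_mul]

lemma square_vol : volume (Icc (-1:ℝ) 1 ×ˢ Icc (-1:ℝ) 1) = 4 := by
  rw [show (volume : Measure (ℝ × ℝ)) = (volume : Measure ℝ).prod volume from
    Measure.volume_eq_prod ℝ ℝ, Measure.prod_prod, Real.volume_Icc]
  rw [show (1:ℝ) - -1 = 2 by norm_num, ENNReal.ofReal_ofNat]
  norm_num

lemma parArea2 (c u v : ℝ × ℝ) :
    volume ((fun st : ℝ × ℝ => c + st.1 • u + st.2 • v) '' (Icc (-1:ℝ) 1 ×ˢ Icc (-1:ℝ) 1))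
      = ENNReal.ofReal (4 * |d2 u v|) := by
  have himg : (fun st : ℝ × ℝ => c + st.1 • u + st.2 • v) '' (Icc (-1:ℝ) 1 ×ˢ Icc (-1:ℝ) 1)
      = c +ᵥ (⇑(Lmap u v) '' (Icc (-1:ℝ) 1 ×ˢ Icc (-1:ℝ) 1)) := by
    rw [← Set.image_vadd, ← Set.image_comp]
    apply Set.image_congr
    intro st _
    show c + st.1 • u + st.2 • v = c + (st.1 • u + st.2 • v)
    rw [add_assoc]
  rw [himg, measure_vadd, Measure.addHaar_image_linearMap, det_Lmap, square_vol,
    show (4 : ℝ≥0∞) = ENNReal.ofReal 4 by norm_num,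
    ← ENNReal.ofReal_mul (abs_nonneg _), mul_comm]

lemma cont_par (c u v : Plane) : Continuous (fun st : ℝ × ℝ => c + st.1 • u + st.2 • v) :=
  (continuous_const.add (continuous_fst.smul continuous_const)).add
    (continuous_snd.smul continuous_const)

lemma parArea (c u v : Plane) :
    area ((fun st : ℝ × ℝ => c + st.1 • u + st.2 • v) '' (Icc (-1:ℝ) 1 ×ˢ Icc (-1:ℝ) 1))
      = 4 * |d2 (FL u) (FL v)| := by
  have hcomp : IsCompact ((fun st : ℝ × ℝ => c + st.1 • u + st.2 • v) ''
      (Icc (-1:ℝ) 1 ×ˢ Icc (-1:ℝ) 1)) :=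
    (isCompact_Icc.prod isCompact_Icc).image (cont_par c u v)
  have hFLcomp : ⇑FL ∘ (fun st : ℝ × ℝ => c + st.1 • u + st.2 • v)
      = fun st : ℝ × ℝ => FL c + st.1 • FL u + st.2 • FL v := by
    funext st
    simp [map_add, _root_.map_smul]
  unfold area
  rw [← vol_FL_image _ hcomp.measurableSet, ← Set.image_comp, hFLcomp, parArea2,
    ENNReal.toReal_ofReal (by positivity)]

lemma par_subset (M : Set Plane) (hconv : Convex ℝ M) (c u v : Plane)
    (h1 : c + u + v ∈ M) (h2 : c + u - v ∈ M) (h3 : c - u + v ∈ M) (h4 : c - u - v ∈ M) :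
    (fun st : ℝ × ℝ => c + st.1 • u + st.2 • v) '' (Icc (-1:ℝ) 1 ×ˢ Icc (-1:ℝ) 1) ⊆ M := by
  rintro _ ⟨⟨s, t⟩, ⟨hs, ht⟩, rfl⟩
  rw [Set.mem_Icc] at hs ht
  have ha : (0:ℝ) ≤ (1 + t) / 2 := by linarith [ht.1]
  have hb : (0:ℝ) ≤ (1 - t) / 2 := by linarith [ht.2]
  have hab : (1 + t) / 2 + (1 - t) / 2 = 1 := by ring
  have hA : c + u + t • v ∈ M := by
    have hm := hconv h1 h2 ha hb hab
    rwa [show ((1+t)/2) • (c+u+v) + ((1-t)/2) • (c+u-v) = c + u + t • v by module] at hm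
  have hB : c - u + t • v ∈ M := by
    have hm := hconv h3 h4 ha hb hab
    rwa [show ((1+t)/2) • (c-u+v) + ((1-t)/2) • (c-u-v) = c - u + t • v by module] at hm
  have ha' : (0:ℝ) ≤ (1 + s) / 2 := by linarith [hs.1]
  have hb' : (0:ℝ) ≤ (1 - s) / 2 := by linarith [hs.2]
  have hab' : (1 + s) / 2 + (1 - s) / 2 = 1 := by ring
  have hm := hconv hA hB ha' hb' hab'
  rwa [show ((1+s)/2) • (c+u+t•v) + ((1-s)/2) • (c-u+t•v) = c + s • u + t • v by module] at hm

lemma hull_eq (M : Set Plane) (hconv : Convex ℝ M) (x : Plane) :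
    convexHull ℝ (M ∪ (x +ᵥ M)) = M + segment ℝ 0 x := by
  apply le_antisymm
  · apply convexHull_min
    · apply Set.union_subset
      · intro m hm
        exact ⟨m, hm, 0, left_mem_segment ℝ 0 x, add_zero m⟩
      · rintro _ ⟨m, hm, rfl⟩
        exact ⟨m, hm, x, right_mem_segment ℝ 0 x, by
          show m + x = x +ᵥ m
          rw [vadd_eq_add, add_comm]⟩
    · exact hconv.add (convex_segment 0 x)
  · rintro _ ⟨m, hm, y, hy, rfl⟩
    rw [segment_eq_image] at hy
    obtain ⟨θ, hθ, rfl⟩ := hy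
    rw [Set.mem_Icc] at hθ
    show m + ((1 - θ) • (0:Plane) + θ • x) ∈ _
    rw [show m + ((1 - θ) • (0:Plane) + θ • x) = (1 - θ) • m + θ • (x + m) by module]
    have hmem1 : m ∈ convexHull ℝ (M ∪ (x +ᵥ M)) := subset_convexHull ℝ _ (Or.inl hm)
    have hmem2 : x + m ∈ convexHull ℝ (M ∪ (x +ᵥ M)) :=
      subset_convexHull ℝ _ (Or.inr ⟨m, hm, rfl⟩)
    exact (convex_convexHull ℝ (M ∪ (x +ᵥ M))) hmem1 hmem2 (by linarith [hθ.2]) hθ.1 (by ring)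

lemma isCompact_seg (x : Plane) : IsCompact (segment ℝ 0 x) := by
  rw [segment_eq_image]
  exact isCompact_Icc.image
    (((continuous_const.sub continuous_id).smul continuous_const).add
      (continuous_id.smul continuous_const))

lemma sym_sSup (S : Set ℝ) (hc : IsCompact S) (hconv : Convex ℝ S) (hne : S.Nonempty)
    (hsym : ∀ s ∈ S, -s ∈ S) : volume S = ENNReal.ofReal (2 * sSup S) := by
  set h := sSup S with hh
  have hmem : h ∈ S := hc.sSup_mem hne
  have hneg : -h ∈ S := hsym h hmem
  have hS : S = Icc (-h) h := by
    apply le_antisymm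
    · intro s hs
      have h1 : s ≤ h := le_csSup hc.bddAbove hs
      have h2 : -s ≤ h := le_csSup hc.bddAbove (hsym s hs)
      exact ⟨by linarith, h1⟩
    · exact hconv.ordConnected.out hneg hmem
  rw [hS, Real.volume_Icc]
  congr 1
  ring

lemma sSup_nonneg_of_sym (S : Set ℝ) (hc : IsCompact S) (hne : S.Nonempty)
    (hsym : ∀ s ∈ S, -s ∈ S) : 0 ≤ sSup S := by
  obtain ⟨s, hs⟩ := hne
  have h1 : s ≤ sSup S := le_csSup hc.bddAbove hs
  have h2 : -s ≤ sSup S := le_csSup hc.bddAbove (hsym s hs)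
  linarith

lemma area_hull (M : Set Plane) (hMc : IsCompact M) (hconv : Convex ℝ M) (x : Plane) :
    volume (convexHull ℝ (M ∪ (x +ᵥ M)))
      = volume M + volume ((fun m => d2 (FL x) (FL m)) '' M) := by
  rw [hull_eq M hconv x]
  have hmeas : MeasurableSet (M + segment ℝ 0 x) := (hMc.add (isCompact_seg x)).measurableSet
  have hNc : IsCompact (⇑FL '' M) := hMc.image FL.toLinearMap.continuous_of_finiteDimensional
  have hNconv : Convex ℝ (⇑FL '' M) := hconv.linear_image FL.toLinearMap
  have himg : ⇑FL '' (M + segment ℝ 0 x) = (⇑FL '' M) + segment ℝ 0 (FL x) := by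
    rw [show ⇑FL = ⇑FL.toLinearMap from rfl, linimage_add, linimage_segment]
  have hNc' : IsCompact (⇑FL '' M) := hNc
  rw [← vol_FL_image _ hmeas, himg, main_formula _ hNc hNconv,
    vol_FL_image M hMc.measurableSet, ← Set.image_comp]
  rfl

def dform (x : Plane) : Plane →ₗ[ℝ] ℝ where
  toFun m := d2 (FL x) (FL m)
  map_add' a b := by simp only [map_add, d2, Prod.fst_add, Prod.snd_add]; ring
  map_smul' r a := by
    simp only [_root_.map_smul, d2, Prod.smul_fst, Prod.smul_snd, smul_eq_mul,
      RingHom.id_apply]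
    ring

lemma d2_smul_left (r : ℝ) (a b : ℝ × ℝ) : d2 (r • a) b = r * d2 a b := by
  simp only [d2, Prod.smul_fst, Prod.smul_snd, smul_eq_mul]; ring

section Assembly

variable {M : Set Plane} (hMc : IsCompact M) (hMconv : Convex ℝ M) (hMne : M.Nonempty)
  (hnegmem : ∀ m ∈ M, -m ∈ M)

def SS (M : Set Plane) (x : Plane) : Set ℝ := ⇑(dform x) '' M

include hMc in
lemma SS_compact (x : Plane) : IsCompact (SS M x) :=
  hMc.image (dform x).continuous_of_finiteDimensional

include hMne in
lemma SS_nonempty (x : Plane) : (SS M x).Nonempty := hMne.image _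

include hnegmem in
lemma SS_sym (x : Plane) : ∀ s ∈ SS M x, -s ∈ SS M x := by
  rintro _ ⟨m, hm, rfl⟩
  exact ⟨-m, hnegmem m hm, map_neg (dform x) m⟩

include hMc hMconv hMne hnegmem in
lemma key1 (x : Plane) :
    area (convexHull ℝ (M ∪ (x +ᵥ M))) = area M + 2 * sSup (SS M x) := by
  have h := area_hull M hMc hMconv x
  have hvol : volume ((fun m => d2 (FL x) (FL m)) '' M) = volume (SS M x) := rfl
  have hS := sym_sSup (SS M x) (SS_compact hMc x) (hMconv.linear_image (dform x))
    (SS_nonempty hMne x) (SS_sym hnegmem x)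
  have hW0 : 0 ≤ sSup (SS M x) :=
    sSup_nonneg_of_sym _ (SS_compact hMc x) (SS_nonempty hMne x) (SS_sym hnegmem x)
  unfold area
  rw [h, hvol, hS, ENNReal.toReal_add (hMc.measure_lt_top.ne) ENNReal.ofReal_ne_top,
    ENNReal.toReal_ofReal (by linarith)]


include hMconv hnegmem in
lemma parbound {Pp : Set Plane}
    (hPmax : ∀ Q : Set Plane, IsParallelogram Q → Q ⊆ M → area Q ≤ area Pp)
    {a m : Plane} (ha : a ∈ M) (hm : m ∈ M) :
    |d2 (FL a) (FL m)| ≤ 2⁻¹ * area Pp := by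
  have hQpar : IsParallelogram ((fun st : ℝ × ℝ =>
      (0:Plane) + st.1 • ((2:ℝ)⁻¹ • (a + m)) + st.2 • ((2:ℝ)⁻¹ • (a - m))) ''
      (Icc (-1:ℝ) 1 ×ˢ Icc (-1:ℝ) 1)) := ⟨0, _, _, rfl⟩
  have hQsub := par_subset M hMconv 0 ((2:ℝ)⁻¹ • (a + m)) ((2:ℝ)⁻¹ • (a - m))
    (by rw [show (0:Plane) + (2:ℝ)⁻¹ • (a + m) + (2:ℝ)⁻¹ • (a - m) = a by module]; exact ha)
    (by rw [show (0:Plane) + (2:ℝ)⁻¹ • (a + m) - (2:ℝ)⁻¹ • (a - m) = m by module]; exact hm)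
    (by rw [show (0:Plane) - (2:ℝ)⁻¹ • (a + m) + (2:ℝ)⁻¹ • (a - m) = -m by module]
        exact hnegmem m hm)
    (by rw [show (0:Plane) - (2:ℝ)⁻¹ • (a + m) - (2:ℝ)⁻¹ • (a - m) = -a by module]
        exact hnegmem a ha)
  have hq := hPmax _ hQpar hQsub
  rw [parArea] at hq
  have hFLu : FL ((2:ℝ)⁻¹ • (a + m)) = (2:ℝ)⁻¹ • (FL a + FL m) := by
    rw [_root_.map_smul, map_add]
  have hFLv : FL ((2:ℝ)⁻¹ • (a - m)) = (2:ℝ)⁻¹ • (FL a - FL m) := by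
    rw [_root_.map_smul, map_sub]
  rw [hFLu, hFLv] at hq
  have hd : d2 ((2:ℝ)⁻¹ • (FL a + FL m)) ((2:ℝ)⁻¹ • (FL a - FL m))
      = -(2:ℝ)⁻¹ * d2 (FL a) (FL m) := by
    simp only [d2, Prod.smul_fst, Prod.smul_snd, Prod.fst_add, Prod.snd_add, Prod.fst_sub,
      Prod.snd_sub, smul_eq_mul]
    ring
  rw [hd, abs_mul, abs_neg, abs_of_pos (by norm_num : (0:ℝ) < 2⁻¹)] at hq
  linarith

include hMconv hMne hnegmem in
lemma keyW_le {Pp : Set Plane}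
    (hPmax : ∀ Q : Set Plane, IsParallelogram Q → Q ⊆ M → area Q ≤ area Pp)
    (x : Plane) (hx2 : (2:ℝ)⁻¹ • x ∈ M) : sSup (SS M x) ≤ area Pp := by
  apply csSup_le (SS_nonempty hMne x)
  rintro _ ⟨m, hm, rfl⟩
  have hxeq : FL x = (2:ℝ) • FL ((2:ℝ)⁻¹ • x) := by
    rw [_root_.map_smul, smul_smul]
    norm_num
  have hb := parbound hMconv hnegmem hPmax hx2 hm
  calc dform x m ≤ |d2 (FL x) (FL m)| := le_abs_self _
    _ = 2 * |d2 (FL ((2:ℝ)⁻¹ • x)) (FL m)| := by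
        rw [hxeq, d2_smul_left, abs_mul, abs_of_pos (by norm_num : (0:ℝ) < 2)]
    _ ≤ area Pp := by linarith
end Assembly

end MaxHull

open MaxHull in
/-- For an o-symmetric plane convex body M, the maximal area of the convex hull of two
intersecting translates of M equals λ(M) + 2λ(P), where P is a largest-area inscribed
parallelogram; equivalently, the ratio to λ(M) equals 1 + 2λ(P)/λ(M). -/
theorem max_hull_symmetric (M P : Set Plane) (hM : IsConvexBody M) (hsym : M = -M)
    (hP : IsParallelogram P) (hPM : P ⊆ M)
    (hPmax : ∀ Q : Set Plane, IsParallelogram Q → Q ⊆ M → area Q ≤ area P) :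
    sSup {A : ℝ | ∃ x : Plane, (M ∩ (x +ᵥ M)).Nonempty ∧
        A = area (convexHull ℝ (M ∪ (x +ᵥ M)))} = area M + 2 * area P ∧
      sSup {A : ℝ | ∃ x : Plane, (M ∩ (x +ᵥ M)).Nonempty ∧
        A = area (convexHull ℝ (M ∪ (x +ᵥ M)))} / area M = 1 + 2 * area P / area M := by
  obtain ⟨hMc, hMconv, hMint⟩ := hM
  have hMne : M.Nonempty := by
    obtain ⟨z, hz⟩ := hMint
    exact ⟨z, interior_subset hz⟩
  have hnegmem : ∀ m ∈ M, -m ∈ M := by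
    intro m hm
    rw [hsym]
    exact Set.neg_mem_neg.mpr hm
  obtain ⟨c0, u0, v0, hPeq⟩ := hP
  have hareaP : area P = 4 * |d2 (FL u0) (FL v0)| := by
    rw [hPeq]; exact parArea c0 u0 v0
  have hcorner : ∀ s t : ℝ, s ∈ Icc (-1:ℝ) 1 → t ∈ Icc (-1:ℝ) 1 →
      c0 + s • u0 + t • v0 ∈ M := by
    intro s t hs ht
    apply hPM
    rw [hPeq]
    exact ⟨(s, t), ⟨hs, ht⟩, rfl⟩
  have hIcc1 : (1:ℝ) ∈ Icc (-1:ℝ) 1 := by constructor <;> norm_num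
  have hIccm1 : (-1:ℝ) ∈ Icc (-1:ℝ) 1 := by constructor <;> norm_num
  have h11 : c0 + u0 + v0 ∈ M := by
    have h := hcorner 1 1 hIcc1 hIcc1
    rwa [one_smul, one_smul] at h
  have h1m1 : c0 + u0 - v0 ∈ M := by
    have h := hcorner 1 (-1) hIcc1 hIccm1
    rwa [show c0 + (1:ℝ) • u0 + (-1:ℝ) • v0 = c0 + u0 - v0 by module] at h
  have hm11 : c0 - u0 + v0 ∈ M := by
    have h := hcorner (-1) 1 hIccm1 hIcc1
    rwa [show c0 + (-1:ℝ) • u0 + (1:ℝ) • v0 = c0 - u0 + v0 by module] at h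
  have hm1m1 : c0 - u0 - v0 ∈ M := by
    have h := hcorner (-1) (-1) hIccm1 hIccm1
    rwa [show c0 + (-1:ℝ) • u0 + (-1:ℝ) • v0 = c0 - u0 - v0 by module] at h
  have hhalf : (0:ℝ) ≤ 2⁻¹ := by norm_num
  have hhalfsum : (2⁻¹:ℝ) + 2⁻¹ = 1 := by norm_num
  have hsum : u0 + v0 ∈ M := by
    have h := hMconv h11 (hnegmem _ hm1m1) hhalf hhalf hhalfsum
    rwa [show (2⁻¹:ℝ) • (c0 + u0 + v0) + (2⁻¹:ℝ) • (-(c0 - u0 - v0)) = u0 + v0 by module] at h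
  have hdiff : u0 - v0 ∈ M := by
    have h := hMconv h1m1 (hnegmem _ hm11) hhalf hhalf hhalfsum
    rwa [show (2⁻¹:ℝ) • (c0 + u0 - v0) + (2⁻¹:ℝ) • (-(c0 - u0 + v0)) = u0 - v0 by module] at h
  set x₀ : Plane := (2:ℝ) • (u0 + v0) with hx0
  have hx0half : (2:ℝ)⁻¹ • x₀ ∈ M := by
    rw [hx0, show (2:ℝ)⁻¹ • ((2:ℝ) • (u0 + v0)) = u0 + v0 by module]
    exact hsum
  have hWle : sSup (SS M x₀) ≤ area P := keyW_le hMconv hMne hnegmem hPmax x₀ hx0half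
  have hcalc : ∀ A B : ℝ × ℝ, d2 ((2:ℝ) • (A + B)) (A - B) = -4 * d2 A B := by
    intro A B
    simp only [d2, Prod.smul_fst, Prod.smul_snd, Prod.fst_add, Prod.snd_add, Prod.fst_sub,
      Prod.snd_sub, smul_eq_mul]
    ring
  have hval1 : dform x₀ (u0 - v0) = -4 * d2 (FL u0) (FL v0) := by
    show d2 (FL x₀) (FL (u0 - v0)) = _
    rw [hx0, _root_.map_smul, map_add, map_sub]
    exact hcalc _ _
  have hval2 : dform x₀ (v0 - u0) = 4 * d2 (FL u0) (FL v0) := by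
    have h := map_neg (dform x₀) (u0 - v0)
    rw [show -(u0 - v0) = v0 - u0 by module] at h
    rw [h, hval1]
    ring
  have hbdd : BddAbove (SS M x₀) := (SS_compact hMc x₀).bddAbove
  have hmem1 : dform x₀ (u0 - v0) ∈ SS M x₀ := ⟨u0 - v0, hdiff, rfl⟩
  have hmem2 : dform x₀ (v0 - u0) ∈ SS M x₀ := by
    refine ⟨v0 - u0, ?_, rfl⟩
    have h := hnegmem _ hdiff
    rwa [show -(u0 - v0) = v0 - u0 by module] at h
  have hWge : area P ≤ sSup (SS M x₀) := by
    rcases abs_cases (d2 (FL u0) (FL v0)) with ⟨habs, _⟩ | ⟨habs, _⟩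
    · rw [hareaP, habs, show (4:ℝ) * d2 (FL u0) (FL v0) = dform x₀ (v0 - u0) from hval2.symm]
      exact le_csSup hbdd hmem2
    · rw [hareaP, habs, show (4:ℝ) * -d2 (FL u0) (FL v0) = dform x₀ (u0 - v0) by
        rw [hval1]; ring]
      exact le_csSup hbdd hmem1
  have hWeq : sSup (SS M x₀) = area P := le_antisymm hWle hWge
  have hmemA : area M + 2 * area P ∈ {A : ℝ | ∃ x : Plane, (M ∩ (x +ᵥ M)).Nonempty ∧
      A = area (convexHull ℝ (M ∪ (x +ᵥ M)))} := by
    refine ⟨x₀, ⟨u0 + v0, hsum, ⟨-(u0 + v0), hnegmem _ hsum, ?_⟩⟩, ?_⟩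
    · show x₀ + -(u0 + v0) = u0 + v0
      rw [hx0]; module
    · rw [key1 hMc hMconv hMne hnegmem x₀, hWeq]
  have hub : ∀ a ∈ {A : ℝ | ∃ x : Plane, (M ∩ (x +ᵥ M)).Nonempty ∧
      A = area (convexHull ℝ (M ∪ (x +ᵥ M)))}, a ≤ area M + 2 * area P := by
    rintro a ⟨x, hxne, rfl⟩
    rw [key1 hMc hMconv hMne hnegmem x]
    obtain ⟨z, hzM, hzv⟩ := hxne
    obtain ⟨b, hbM, hxb⟩ := hzv
    have hxzb : x = z - b := by
      have h : x + b = z := hxb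
      exact eq_sub_of_add_eq h
    have hxhalf : (2:ℝ)⁻¹ • x ∈ M := by
      have h := hMconv hzM (hnegmem b hbM) hhalf hhalf hhalfsum
      rwa [show (2⁻¹:ℝ) • z + (2⁻¹:ℝ) • (-b) = (2:ℝ)⁻¹ • (z - b) by module, ← hxzb] at h
    have h := keyW_le hMconv hMne hnegmem hPmax x hxhalf
    linarith
  have hA1 : sSup {A : ℝ | ∃ x : Plane, (M ∩ (x +ᵥ M)).Nonempty ∧
      A = area (convexHull ℝ (M ∪ (x +ᵥ M)))} = area M + 2 * area P :=
    le_antisymm (csSup_le ⟨_, hmemA⟩ hub) (le_csSup ⟨_, hub⟩ hmemA)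
  refine ⟨hA1, ?_⟩
  rw [hA1]
  have hpos : 0 < area M := by
    apply ENNReal.toReal_pos _ hMc.measure_lt_top.ne
    have h1 : 0 < volume (interior M) := IsOpen.measure_pos volume isOpen_interior hMint
    have h2 : volume (interior M) ≤ volume M := measure_mono interior_subset
    exact (lt_of_lt_of_le h1 h2).ne'
  rw [add_div, div_self (ne_of_gt hpos)]
end
end

section
/- Let K be a convex body in ℝⁿ and let c_tr(K) = (1/λ(K)) · max{λ(conv(K ∪ (x+K))) : x ∈ ℝⁿ, K ∩ (x+K) ≠ ∅}. Then c_tr(K) ≤ 1 + n. -/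
open MeasureTheory Set Pointwise ENNReal Filter

noncomputable section

/-- c_tr(K): the maximal volume of the convex hull of two intersecting translates of K,
divided by the volume of K. -/
def ctr (n : ℕ) (K : Set (EuclideanSpace ℝ (Fin n))) : ℝ :=
  sSup {A : ℝ | ∃ x : EuclideanSpace ℝ (Fin n), (K ∩ (x +ᵥ K)).Nonempty ∧
      A = (volume (convexHull ℝ (K ∪ (x +ᵥ K)))).toReal} / (volume K).toReal

private lemma pow_one_add_le (n : ℕ) {t : ℝ} (ht : 0 ≤ t) (ht1 : t ≤ 1) :
    (1 + t) ^ n ≤ 1 + n * t + 4 ^ n * t ^ 2 := by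
  induction n with
  | zero => norm_num; nlinarith
  | succ n ih =>
    have hn4 : (n : ℝ) < 4 ^ n := by exact_mod_cast (Nat.lt_pow_self (by norm_num : 1 < 4) : n < 4 ^ n)
    have h1t : (0:ℝ) ≤ 1 + t := by linarith
    have h4 : (0:ℝ) < 4 ^ n := by positivity
    have h1 : 0 ≤ t^2 * (2*4^n - n) := mul_nonneg (sq_nonneg t) (by linarith)
    have h2 : 0 ≤ t^2 * 4^n * (1 - t) :=
      mul_nonneg (mul_nonneg (sq_nonneg t) h4.le) (by linarith)
    calc (1 + t) ^ (n+1) = (1+t)^n * (1+t) := by ring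
      _ ≤ (1 + n*t + 4^n*t^2) * (1+t) := mul_le_mul_of_nonneg_right ih h1t
      _ ≤ 1 + (↑(n+1))*t + 4^(n+1)*t^2 := by push_cast; nlinarith [pow_succ (4:ℝ) n]

private lemma main_bound {n : ℕ} {K : Set (EuclideanSpace ℝ (Fin n))} (hK : IsConvexBody K)
    {x : EuclideanSpace ℝ (Fin n)} (hx : (K ∩ (x +ᵥ K)).Nonempty) :
    (volume (convexHull ℝ (K ∪ (x +ᵥ K)))).toReal ≤ (1 + n) * (volume K).toReal := by
  obtain ⟨hKc, hKconv, hKint⟩ := hK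
  obtain ⟨a, haK, hax⟩ := hx
  obtain ⟨b, hbK, hba⟩ := hax
  have hxab : x = a - b := by rw [← hba]; simp [vadd_eq_add]
  set A : ℝ → Set (EuclideanSpace ℝ (Fin n)) := fun t => ((· • x) '' Icc (0:ℝ) t) + K with hA
  set g : ℝ → ℝ := fun t => (volume (A t)).toReal with hg
  set gK : ℝ := (volume K).toReal with hgK
  -- basic properties of A
  have hAcomp : ∀ t : ℝ, IsCompact (A t) :=
    fun t => (isCompact_Icc.image (continuous_id.smul continuous_const)).add hKc
  have hAfin : ∀ t : ℝ, volume (A t) ≠ ⊤ := fun t => (hAcomp t).measure_lt_top.ne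
  have hA0 : A 0 = K := by
    rw [hA]
    simp [Icc_self, Set.image_singleton, zero_smul, Set.singleton_add]
  -- union identity
  have hunion : ∀ s t : ℝ, 0 ≤ s → 0 ≤ t → A (s + t) = A s ∪ (s • x +ᵥ A t) := by
    intro s t hs ht
    ext p
    simp only [hA, Set.mem_add, Set.mem_image, Set.mem_union, Set.mem_vadd_set, Set.mem_Icc]
    constructor
    · rintro ⟨-, ⟨u, ⟨hu0, hu1⟩, rfl⟩, k, hk, rfl⟩
      rcases le_or_gt u s with h | h
      · exact Or.inl ⟨_, ⟨u, ⟨hu0, h⟩, rfl⟩, k, hk, rfl⟩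
      · refine Or.inr ⟨(u - s) • x + k, ⟨_, ⟨u - s, ⟨by linarith, by linarith⟩, rfl⟩, k, hk, rfl⟩, ?_⟩
        simp [vadd_eq_add, ← add_assoc, ← add_smul]
    · rintro (⟨-, ⟨u, ⟨hu0, hu1⟩, rfl⟩, k, hk, rfl⟩ | ⟨q, ⟨-, ⟨u, ⟨hu0, hu1⟩, rfl⟩, k, hk, rfl⟩, rfl⟩)
      · exact ⟨_, ⟨u, ⟨hu0, by linarith⟩, rfl⟩, k, hk, rfl⟩
      · refine ⟨(s+u) • x, ⟨s+u, ⟨by linarith, by linarith⟩, rfl⟩, k, hk, ?_⟩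
        simp [vadd_eq_add, add_smul]; abel
  -- intersection identity
  have hinter : ∀ s t : ℝ, 0 ≤ s → 0 ≤ t → A s ∩ (s • x +ᵥ A t) = s • x +ᵥ K := by
    intro s t hs ht
    ext p
    simp only [hA, Set.mem_inter_iff, Set.mem_add, Set.mem_image, Set.mem_vadd_set, Set.mem_Icc]
    constructor
    · rintro ⟨⟨-, ⟨u₁, ⟨hu₁0, hu₁s⟩, rfl⟩, k₁, hk₁, he₁⟩,
        q, ⟨-, ⟨u₂, ⟨hu₂0, hu₂t⟩, rfl⟩, k₂, hk₂, rfl⟩, he₂⟩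
      have hle : u₁ ≤ s + u₂ := by linarith
      have hsmem : s ∈ segment ℝ u₁ (s + u₂) := by
        rw [segment_eq_Icc hle]; exact ⟨by linarith, by linarith⟩
      obtain ⟨θ₁, θ₂, hθ₁, hθ₂, hθsum, hθ⟩ := hsmem
      refine ⟨θ₁ • k₁ + θ₂ • k₂, hKconv hk₁ hk₂ hθ₁ hθ₂ hθsum, ?_⟩
      have e₁ : k₁ = p - u₁ • x := by rw [← he₁]; abel
      have e₂ : k₂ = p - (s + u₂) • x := by
        rw [← he₂]; simp only [vadd_eq_add, add_smul]; abel
      rw [e₁, e₂, smul_sub, smul_sub, smul_smul, smul_smul, vadd_eq_add]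
      have hs' : (θ₁ * u₁) • x + (θ₂ * (s + u₂)) • x = s • x := by
        rw [← add_smul]
        simp only [smul_eq_mul] at hθ
        rw [hθ]
      calc s • x + (θ₁ • p - (θ₁ * u₁) • x + (θ₂ • p - (θ₂ * (s + u₂)) • x))
          = (θ₁ + θ₂) • p + (s • x - ((θ₁ * u₁) • x + (θ₂ * (s + u₂)) • x)) := by
            rw [add_smul]; abel
        _ = p := by rw [hs', hθsum, one_smul]; abel
    · rintro ⟨k, hk, rfl⟩
      exact ⟨⟨s • x, ⟨s, ⟨hs, le_refl s⟩, rfl⟩, k, hk, rfl⟩,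
        k, ⟨0 • x, ⟨0, ⟨le_refl 0, ht⟩, rfl⟩, k, hk, by simp⟩, rfl⟩
  -- valuation identity for g
  have hval : ∀ s t : ℝ, 0 ≤ s → 0 ≤ t → g (s + t) + gK = g s + g t := by
    intro s t hs ht
    have hmeasB : MeasurableSet (s • x +ᵥ A t) := by
      have : s • x +ᵥ A t = (fun p => s • x + p) '' A t := rfl
      rw [this]
      exact ((hAcomp t).image (continuous_const.add continuous_id)).measurableSet
    have h := measure_union_add_inter (μ := volume) (A s) hmeasB
    rw [← hunion s t hs ht, hinter s t hs ht, measure_vadd, measure_vadd] at h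
    have := congrArg ENNReal.toReal h
    rw [ENNReal.toReal_add (hAfin _) hKc.measure_lt_top.ne,
      ENNReal.toReal_add (hAfin _) (hAfin _)] at this
    exact this
  have hg0 : g 0 = gK := by rw [hg]; simp only [hA0]; rfl
  -- iterate: g (k * τ) = gK + k * (g τ - gK)
  have hiter : ∀ (τ : ℝ), 0 ≤ τ → ∀ k : ℕ, g (k * τ) = gK + k * (g τ - gK) := by
    intro τ hτ k
    induction k with
    | zero => simpa using hg0
    | succ k ih =>
      have hkτ : (0:ℝ) ≤ k * τ := by positivity
      have := hval (k * τ) τ hkτ hτ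
      push_cast
      have harg : ((k:ℝ) + 1) * τ = k * τ + τ := by ring
      rw [harg]
      rw [ih] at this
      linarith
  -- scaling bound : for 0 < t ≤ 1, g t ≤ (1+t)^n * gK
  have hsub : ∀ t : ℝ, 0 < t → A t ⊆ (-(t • b)) +ᵥ ((1 + t) • K) := by
    intro t ht
    rintro p ⟨-, ⟨u, ⟨hu0, hut⟩, rfl⟩, k, hk, rfl⟩
    have h1t : (0:ℝ) < 1 + t := by linarith
    have hm : (u/t) • a + ((t-u)/t) • b ∈ K :=
      hKconv haK hbK (by positivity) (div_nonneg (by linarith) ht.le) (by field_simp; ring)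
    have hk' : (t/(1+t)) • ((u/t) • a + ((t-u)/t) • b) + (1/(1+t)) • k ∈ K :=
      hKconv hm hk (by positivity) (by positivity) (by field_simp; ring)
    rw [Set.mem_vadd_set]
    refine ⟨(1+t) • ((t/(1+t)) • ((u/t) • a + ((t-u)/t) • b) + (1/(1+t)) • k),
      smul_mem_smul_set hk', ?_⟩
    have htne : t ≠ 0 := ht.ne'
    have h1tne : (1:ℝ) + t ≠ 0 := h1t.ne'
    rw [hxab]
    simp only [vadd_eq_add]
    match_scalars <;> (field_simp; try ring)
  have hgbound : ∀ t : ℝ, 0 < t → g t ≤ (1 + t) ^ n * gK := by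
    intro t ht
    have h1t : (0:ℝ) ≤ 1 + t := by linarith
    have hμ : volume (A t) ≤ ENNReal.ofReal ((1 + t) ^ n) * volume K := by
      calc volume (A t) ≤ volume ((-(t • b)) +ᵥ ((1 + t) • K)) := measure_mono (hsub t ht)
        _ = volume ((1 + t) • K) := measure_vadd volume _ _
        _ = ENNReal.ofReal ((1 + t) ^ n) * volume K := by
            rw [Measure.addHaar_smul_of_nonneg volume h1t K, finrank_euclideanSpace_fin]
    have hfin : ENNReal.ofReal ((1 + t) ^ n) * volume K ≠ ⊤ :=
      ENNReal.mul_ne_top ENNReal.ofReal_ne_top hKc.measure_lt_top.ne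
    have := ENNReal.toReal_mono hfin hμ
    rwa [ENNReal.toReal_mul, ENNReal.toReal_ofReal (by positivity)] at this
  -- conclude g 1 ≤ (1 + n) * gK via the limit argument
  have hgKnn : 0 ≤ gK := ENNReal.toReal_nonneg
  have hg1 : ∀ m : ℕ, 1 ≤ m → g 1 ≤ (1 + n + 4^n / m) * gK := by
    intro m hm
    have hmpos : (0:ℝ) < m := by exact_mod_cast hm
    have hτ : (0:ℝ) < 1 / (m:ℝ) := by positivity
    have hτ1 : (1:ℝ) / (m:ℝ) ≤ 1 := by
      rw [div_le_one hmpos]; exact_mod_cast hm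
    have h1 : g 1 = gK + (m:ℝ) * (g (1/(m:ℝ)) - gK) := by
      have := hiter (1/(m:ℝ)) hτ.le m
      rwa [mul_one_div_cancel hmpos.ne'] at this
    have h2 : g (1/(m:ℝ)) ≤ ((1:ℝ) + 1/(m:ℝ)) ^ n * gK := hgbound _ hτ
    have h3 : ((1:ℝ) + 1/(m:ℝ)) ^ n ≤ 1 + (n:ℝ) * (1/(m:ℝ)) + 4^n * (1/(m:ℝ))^2 :=
      pow_one_add_le n hτ.le hτ1
    have h4 : g (1/(m:ℝ)) - gK ≤ ((n:ℝ) * (1/(m:ℝ)) + 4^n * (1/(m:ℝ))^2) * gK := by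
      linarith [mul_le_mul_of_nonneg_right h3 hgKnn]
    rw [h1]
    have h5 : (m:ℝ) * (g (1/(m:ℝ)) - gK) ≤ (m:ℝ) * (((n:ℝ) * (1/(m:ℝ)) + 4^n * (1/(m:ℝ))^2) * gK) :=
      mul_le_mul_of_nonneg_left h4 hmpos.le
    have h6 : (m:ℝ) * (((n:ℝ) * (1/(m:ℝ)) + 4^n * (1/(m:ℝ))^2) * gK) = ((n:ℝ) + 4^n / (m:ℝ)) * gK := by
      field_simp
    rw [h6] at h5
    linarith [h5]
  have hg1' : g 1 ≤ (1 + n) * gK := by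
    have hlim : Tendsto (fun m : ℕ => (1 + n + 4^n / m) * gK) atTop
        (nhds ((1 + n) * gK)) := by
      have : Tendsto (fun m : ℕ => (1 + (n:ℝ) + 4^n / m)) atTop (nhds (1 + n + 0)) :=
        (tendsto_const_nhds.add (tendsto_const_div_atTop_nhds_zero_nat (4^n)))
      simpa using this.mul_const gK
    refine ge_of_tendsto hlim ?_
    filter_upwards [eventually_ge_atTop 1] with m hm using hg1 m hm
  -- convex hull inclusion
  have hhull : convexHull ℝ (K ∪ (x +ᵥ K)) ⊆ A 1 := by
    apply convexHull_min
    · rintro p (hp | hp)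
      · exact ⟨0 • x, ⟨0, ⟨le_refl 0, zero_le_one⟩, rfl⟩, p, hp, by simp⟩
      · obtain ⟨k, hk, rfl⟩ := hp
        exact ⟨1 • x, ⟨1, ⟨zero_le_one, le_refl 1⟩, rfl⟩, k, hk, by simp [vadd_eq_add]⟩
    · exact ((convex_Icc (0:ℝ) 1).is_linear_image
        ⟨fun u v => add_smul u v x, fun c u => by rw [smul_eq_mul, mul_smul]⟩).add hKconv
  calc (volume (convexHull ℝ (K ∪ (x +ᵥ K)))).toReal
      ≤ g 1 := ENNReal.toReal_mono (hAfin 1) (measure_mono hhull)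
    _ ≤ (1 + n) * gK := hg1'

/-- Rogers–Shephard upper bound: c_tr(K) ≤ 1 + n. -/
theorem ctr_le (n : ℕ) (K : Set (EuclideanSpace ℝ (Fin n))) (hK : IsConvexBody K) :
    ctr n K ≤ 1 + n := by
  have hpos : 0 < (volume K).toReal :=
    ENNReal.toReal_pos (MeasureTheory.Measure.measure_pos_of_nonempty_interior _ hK.2.2).ne' hK.1.measure_lt_top.ne
  rw [ctr, div_le_iff₀ hpos]
  refine Real.sSup_le ?_ (by positivity)
  rintro A ⟨x, hx, rfl⟩
  exact main_bound hK hx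
end
end
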